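/- arXiv:1510.01640 — 8 statements merged into one kernel-verified Lean document; each statement's English description precedes it below -/
import Mathlib

section
/- The least solution in [0,1] of the equation x = 1/12 + (2/3)x² is x = (3 - √7)/4, which is irrational. -/
theorem stmt_1 :
    IsLeast {x : ℝ | x ∈ Set.Icc (0:ℝ) 1 ∧ x = 1/12 + (2/3) * x^2} ((3 - Real.sqrt 7)/4) ∧
    Irrational ((3 - Real.sqrt 7)/4) := by
  have h7 : Real.sqrt 7 ^ 2 = 7 := Real.sq_sqrt (by norm_num)
  have hlb : (2:ℝ) ≤ Real.sqrt 7 := by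
    nlinarith [Real.sqrt_nonneg 7, h7]
  have hub : Real.sqrt 7 ≤ 3 := by
    nlinarith [Real.sqrt_nonneg 7, h7]
  have hirr : Irrational (Real.sqrt 7) := (Nat.Prime.irrational_sqrt (by norm_num))
  constructor
  · constructor
    · refine ⟨⟨by linarith, by linarith⟩, by nlinarith⟩
    · rintro y ⟨⟨hy0, hy1⟩, hy⟩
      have : (y - (3 - Real.sqrt 7)/4) * (y - (3 + Real.sqrt 7)/4) = 0 := by nlinarith
      rcases mul_eq_zero.mp this with h | h
      · linarith
      · exfalso; nlinarith
  · have h1 : Irrational ((3:ℚ) - Real.sqrt 7) := hirr.ratCast_sub (q := 3)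
    have h2 := h1.div_natCast (by norm_num : (4:ℕ) ≠ 0)
    convert h2 using 2 <;> norm_num
end

section
/- There exists a real number r in [0,1] that is the least solution in [0,1] of x = 1/3·((3-√7)/4)² + (2/3)x², namely r = (3 - √(1+3√7))/4, and r is irrational. -/
theorem stmt_2 :
    ∃ r ∈ Set.Icc (0:ℝ) 1,
      IsLeast {x : ℝ | x ∈ Set.Icc (0:ℝ) 1 ∧
        x = (1/3) * ((3 - Real.sqrt 7)/4)^2 + (2/3) * x^2} r ∧
      r = (3 - Real.sqrt (1 + 3 * Real.sqrt 7))/4 ∧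
      Irrational r := by
  set s := Real.sqrt 7 with hs
  have hs2 : s ^ 2 = 7 := Real.sq_sqrt (by norm_num)
  have hs0 : 0 ≤ s := Real.sqrt_nonneg 7
  have hslb : 2 < s := by nlinarith
  have hsub : s ≤ 8/3 := by nlinarith
  set t := Real.sqrt (1 + 3 * s) with htd
  have ht2 : t ^ 2 = 1 + 3 * s := Real.sq_sqrt (by linarith)
  have ht0 : 0 ≤ t := Real.sqrt_nonneg _
  have ht1 : 1 < t := by nlinarith
  have ht3 : t ≤ 3 := by nlinarith
  refine ⟨(3 - t) / 4, ⟨by linarith, by linarith⟩,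
    ⟨⟨⟨by linarith, by linarith⟩, by nlinarith⟩, ?_⟩, rfl, ?_⟩
  · rintro x ⟨⟨hx0, hx1⟩, hx⟩
    have key : (4*x - 3 + t) * (4*x - 3 - t) = 0 := by nlinarith
    have hneg : 4*x - 3 - t < 0 := by linarith
    have : 4*x - 3 + t = 0 := by
      rcases mul_eq_zero.mp key with h | h
      · exact h
      · linarith
    linarith
  · have h7 : Irrational s := by
      rw [hs]
      exact (by norm_num : Nat.Prime 7).irrational_sqrt
    have htirr : Irrational t := by
      rintro ⟨q, hq⟩
      exact h7 ⟨(q^2 - 1)/3, by push_cast; nlinarith [hq]⟩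
    rintro ⟨q, hq⟩
    exact htirr ⟨3 - 4*q, by push_cast; linarith⟩
end

section
/- The number (3 - √(1+3√7))/4 is not a quadratic irrational; that is, it is irrational and is not a root of any quadratic polynomial with rational coefficients. -/
lemma h7' : Irrational (Real.sqrt 7) := by
  have := (by norm_num : Nat.Prime 7).irrational_sqrt
  simpa using this

-- split lemma: if (u:ℝ) * √7 = v with u v : ℚ then u = 0 ∧ v = 0
lemma split7 (u v : ℚ) (h : (u:ℝ) * Real.sqrt 7 = (v:ℝ)) : u = 0 ∧ v = 0 := by
  by_cases hu : u = 0
  · subst hu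
    simp at h
    constructor
    · rfl
    · exact_mod_cast h.symm
  · exfalso
    have : Real.sqrt 7 = ((v / u : ℚ) : ℝ) := by
      push_cast
      field_simp
      linarith [h]
    exact (Rat.not_irrational _) (this ▸ h7')

lemma s_sq : Real.sqrt (1 + 3 * Real.sqrt 7) ^ 2 = 1 + 3 * Real.sqrt 7 := by
  rw [Real.sq_sqrt]
  positivity

lemma s_irr : Irrational (Real.sqrt (1 + 3 * Real.sqrt 7)) := by
  rw [Irrational]
  intro ⟨q, hq⟩
  have h2 := s_sq
  rw [← hq] at h2
  have : (3:ℝ) * Real.sqrt 7 = ((q^2 - 1 : ℚ) : ℝ) := by push_cast; linarith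
  have := split7 3 (q^2-1) (by push_cast; linarith)
  norm_num at this

theorem stmt_3 :
    Irrational ((3 - Real.sqrt (1 + 3 * Real.sqrt 7))/4) ∧
    ∀ a b c : ℚ, a ≠ 0 →
      (a : ℝ) * ((3 - Real.sqrt (1 + 3 * Real.sqrt 7))/4)^2 +
        (b : ℝ) * ((3 - Real.sqrt (1 + 3 * Real.sqrt 7))/4) + (c : ℝ) ≠ 0 := by
  set s := Real.sqrt (1 + 3 * Real.sqrt 7) with hs
  have hs2 := s_sq
  rw [← hs] at hs2
  constructor
  · have h1 : Irrational ((3:ℚ) - s) := s_irr.ratCast_sub (q := 3)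
    have h2 : Irrational (((3:ℚ) - s) / (4:ℚ)) := h1.div_ratCast (by norm_num)
    simpa using h2
  · intro a b c ha h
    have key : ((6*a+4*b : ℚ):ℝ) * s = ((10*a+12*b+16*c : ℚ):ℝ) + ((3*a:ℚ):ℝ) * Real.sqrt 7 := by
      push_cast
      linear_combination (-16)*h + (a:ℝ)*hs2
    set m : ℚ := 6*a+4*b
    set p : ℚ := 10*a+12*b+16*c
    set q : ℚ := 3*a
    have hq : q ≠ 0 := by simp [q]; exact ha
    by_cases hm : m = 0
    · rw [hm] at key
      simp at key
      have := split7 q (-p) (by push_cast; linarith)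
      exact hq this.1
    · -- square
      have sq : ((m:ℝ))^2 * (1 + 3*Real.sqrt 7) = ((p:ℝ) + (q:ℝ)*Real.sqrt 7)^2 := by
        rw [← hs2]
        linear_combination ((m:ℝ)*s + (p:ℝ) + (q:ℝ)*Real.sqrt 7) * key
      have h77 : Real.sqrt 7 ^ 2 = 7 := Real.sq_sqrt (by norm_num)
      have key2 : ((3*m^2 - 2*p*q : ℚ):ℝ) * Real.sqrt 7 = ((p^2 + 7*q^2 - m^2 : ℚ):ℝ) := by
        push_cast
        linear_combination sq + (q:ℝ)^2 * h77
      have hsp := split7 _ _ key2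
      have e1 : 3*m^2 - 2*p*q = 0 := hsp.1
      have e2 : p^2 + 7*q^2 - m^2 = 0 := hsp.2
      have : q^2 > 0 := by positivity
      nlinarith [sq_nonneg (p - q), this, e1, e2]
end

section
/- The unique solution (x₁, x₂) ∈ [0,1]² of the system where x₁ is the least solution in [0,1] of x₁ = (1/3)x₂² + (2/3)x₁² (for fixed x₂), and x₂ is the greatest value in [0,1] satisfying x₂ = (1/3)x₂² + (2/3)x₁² with x₁ so determined, is (0, 0). -/
theorem stmt_5 :
    ∀ x₁ x₂ : ℝ,
      IsLeast {y : ℝ | y ∈ Set.Icc (0:ℝ) 1 ∧ y = (1/3) * x₂^2 + (2/3) * y^2} x₁ →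
      IsGreatest {z : ℝ | z ∈ Set.Icc (0:ℝ) 1 ∧
        ∃ w : ℝ, IsLeast {y : ℝ | y ∈ Set.Icc (0:ℝ) 1 ∧ y = (1/3) * z^2 + (2/3) * y^2} w ∧
          z = (1/3) * z^2 + (2/3) * w^2} x₂ →
      x₁ = 0 ∧ x₂ = 0 := by
  intro x₁ x₂ h₁ h₂
  obtain ⟨⟨hx₂mem, w, hw, heq⟩, _⟩ := h₂
  -- w and x₂ satisfy the same equation, so w = x₂
  have hwfix := hw.1.2
  have hwx : w = x₂ := by linarith [hwfix, heq]
  subst hwx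
  -- hence w = w², so w = 0 or w = 1
  have hsq : w = w ^ 2 := by nlinarith [heq]
  have hcases : w = 0 ∨ w = 1 := by
    rcases mul_eq_zero.mp (by ring_nf; nlinarith : w * (w - 1) = 0) with h | h
    · exact Or.inl h
    · exact Or.inr (by linarith)
  have hx₂0 : w = 0 := by
    rcases hcases with h | h
    · exact h
    · exfalso
      subst h
      have hmem : (1/2 : ℝ) ∈ {y : ℝ | y ∈ Set.Icc (0:ℝ) 1 ∧
          y = (1/3) * (1:ℝ)^2 + (2/3) * y^2} := by
        constructor
        · constructor <;> norm_num
        · norm_num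
      have := hw.2 hmem
      linarith
  subst hx₂0
  refine ⟨?_, rfl⟩
  have h0mem : (0:ℝ) ∈ {y : ℝ | y ∈ Set.Icc (0:ℝ) 1 ∧
      y = (1/3) * (0:ℝ)^2 + (2/3) * y^2} := by
    constructor
    · constructor <;> norm_num
    · norm_num
  have hle := h₁.2 h0mem
  have hge := h₁.1.1.1
  linarith
end

section
/- The only pair (x₂, x₁) ∈ [0,1]² satisfying x₂² + 2x₁² - 3x₁ = 0, 4x₁ ≤ 3, and x₂ = (1/3)x₂² + (2/3)x₁², with x₂ maximal among all such pairs, has x₂ = 0. -/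
theorem stmt_7 :
    IsGreatest {x₂ : ℝ | x₂ ∈ Set.Icc (0:ℝ) 1 ∧
      ∃ x₁ ∈ Set.Icc (0:ℝ) 1,
        x₂^2 + 2 * x₁^2 - 3 * x₁ = 0 ∧ 4 * x₁ ≤ 3 ∧
        x₂ = (1/3) * x₂^2 + (2/3) * x₁^2} 0 := by
  constructor
  · exact ⟨⟨le_refl _, zero_le_one⟩, 0, ⟨le_refl _, zero_le_one⟩, by norm_num, by norm_num, by norm_num⟩
  · rintro x₂ ⟨⟨h0, h1⟩, x₁, ⟨hx0, hx1⟩, heq, hle, hfix⟩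
    have hx : x₂ = x₁ := by linarith
    subst hx
    nlinarith [sq_nonneg x₂]
end

section
/- For each n ∈ ℕ, the complement of the set L_n = {t ∈ {a,b,c}^({L,R}*) : every infinite branch of t contains at least n occurrences of the letter a} is nowhere dense in the product topology. -/
/-- The alphabet {a,b,c}, with `0` playing the role of the letter `a`. -/
abbrev Letter := Fin 3

/-- The prefix of length `n` of an infinite branch `b : ℕ → Bool`,
viewed as a vertex of the full binary tree `{L,R}*` (encoded as `List Bool`). -/
def branchPrefix (b : ℕ → Bool) (n : ℕ) : List Bool := List.ofFn (fun i : Fin n => b i)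

/-- The set of trees having at least `n` occurrences of the letter `a` on every branch. -/
def Ln (n : ℕ) : Set (List Bool → Letter) :=
  {t | ∀ b : ℕ → Bool, ∃ s : Finset ℕ, s.card = n ∧ ∀ m ∈ s, t (branchPrefix b m) = 0}

lemma dense_interior_Ln (n : ℕ) : Dense (interior (Ln n)) := by
  rw [dense_iff_inter_open]
  rintro U hU ⟨t, ht⟩
  obtain ⟨I, u, hIu, hsub⟩ := isOpen_pi_iff.mp hU t ht
  set D : ℕ := (I.sup fun v => v.length) + 1 with hD
  set t' : List Bool → Letter :=
    fun v => if D ≤ v.length ∧ v.length < D + n then 0 else t v with ht'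
  set S : Set (List Bool) := {v | D ≤ v.length ∧ v.length < D + n} with hS
  have hSfin : S.Finite := by
    apply (List.finite_length_lt Bool (D + n)).subset
    intro v hv; exact hv.2
  have hV : IsOpen (S.pi fun _ => ({0} : Set Letter)) :=
    isOpen_set_pi hSfin (fun _ _ => isOpen_discrete _)
  have hVsub : S.pi (fun _ => ({0} : Set Letter)) ⊆ Ln n := by
    intro s hs b
    refine ⟨Finset.Ico D (D + n), by simp, ?_⟩
    intro m hm
    simp only [Finset.mem_Ico] at hm
    have hlen : (branchPrefix b m).length = m := by simp [branchPrefix]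
    have : branchPrefix b m ∈ S := by rw [hS, Set.mem_setOf_eq, hlen]; exact hm
    exact hs _ this
  have ht'V : t' ∈ S.pi (fun _ => ({0} : Set Letter)) := by
    intro v hv
    simp only [ht', Set.mem_singleton_iff]
    exact if_pos hv
  have ht'U : t' ∈ U := by
    apply hsub
    intro v hv
    have hvlen : v.length < D := Nat.lt_succ_of_le (Finset.le_sup hv)
    have : t' v = t v := by
      rw [ht']; simp only
      rw [if_neg]; omega
    rw [this]
    exact (hIu v hv).2
  exact ⟨t', ht'U, mem_interior.mpr ⟨_, hVsub, hV, ht'V⟩⟩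

theorem stmt_12 (n : ℕ) : IsNowhereDense (Ln n)ᶜ := by
  unfold IsNowhereDense
  rw [closure_compl, interior_compl, (dense_interior_Ln n).closure_eq, Set.compl_univ]
end

section
/- Define the sequence (c_n) by c₁ = least solution in [0,1] of x = 1/3 + (2/3)x², and c_{n+1} = least solution in [0,1] of x = (1/3)c_n² + (2/3)x². Then (c_n) is strictly decreasing and converges to 0. -/
open Filter

/-- `c 0` is the probability of `L₁`, and `c n` that of `L_{n+1}`. -/
theorem stmt_17 (c : ℕ → ℝ)
    (h1 : IsLeast {x : ℝ | x ∈ Set.Icc (0:ℝ) 1 ∧ x = 1/3 + (2/3) * x^2} (c 0))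
    (hrec : ∀ n : ℕ,
      IsLeast {x : ℝ | x ∈ Set.Icc (0:ℝ) 1 ∧ x = (1/3) * (c n)^2 + (2/3) * x^2} (c (n+1))) :
    StrictAnti c ∧ Tendsto c atTop (nhds 0) := by
  -- basic facts
  obtain ⟨⟨⟨h00, h01⟩, h0eq⟩, h0lb⟩ := h1
  have hmem : ∀ n, c n ∈ Set.Icc (0:ℝ) 1 := by
    intro n
    cases n with
    | zero => exact ⟨h00, h01⟩
    | succ m => exact (hrec m).1.1
  have heq : ∀ n, c (n+1) = (1/3) * (c n)^2 + (2/3) * (c (n+1))^2 := fun n => (hrec n).1.2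
  have hpos : ∀ n, 0 < c n := by
    intro n
    induction n with
    | zero => nlinarith [sq_nonneg (c 0)]
    | succ m ih => nlinarith [heq m, sq_nonneg (c (m+1))]
  -- c (n+1) ≤ (c n)^2 via IVT
  have hsq : ∀ n, c (n+1) ≤ (c n)^2 := by
    intro n
    set a := (c n)^2 with ha
    have ha0 : 0 ≤ a := sq_nonneg _
    have ha1 : a ≤ 1 := by
      have := (hmem n).1; have := (hmem n).2; nlinarith
    have hcont : ContinuousOn (fun x : ℝ => (1/3) * a + (2/3) * x^2 - x) (Set.Icc 0 a) := by
      fun_prop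
    have hfb : (fun x : ℝ => (1/3) * a + (2/3) * x^2 - x) a ≤ 0 := by
      simp only
      nlinarith
    have hfa : 0 ≤ (fun x : ℝ => (1/3) * a + (2/3) * x^2 - x) 0 := by
      simp only
      nlinarith
    have := intermediate_value_Icc' ha0 hcont (Set.mem_Icc.mpr ⟨hfb, hfa⟩)
    obtain ⟨z, hz, hz0⟩ := this
    have hzmem : z ∈ {x : ℝ | x ∈ Set.Icc (0:ℝ) 1 ∧ x = (1/3) * (c n)^2 + (2/3) * x^2} := by
      constructor
      · exact ⟨hz.1, le_trans hz.2 ha1⟩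
      · simp only at hz0; linarith
    exact le_trans ((hrec n).2 hzmem) hz.2
  have hhalf : ∀ n, c n ≤ 1/2 := by
    intro n
    induction n with
    | zero => exact h0lb (by norm_num)
    | succ m ih =>
      have := hsq m
      have := (hpos m).le
      nlinarith
  have hanti : StrictAnti c := by
    apply strictAnti_nat_of_succ_lt
    intro n
    have h1 := hsq n
    have h2 := hpos n
    have h3 := hhalf n
    nlinarith
  refine ⟨hanti, ?_⟩
  have hbound : ∀ n, c n ≤ (1/2:ℝ)^(n+1) := by
    intro n
    induction n with
    | zero => simpa using hhalf 0
    | succ m ih =>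
      have h1 := hsq m
      have h2 := (hpos m).le
      have h3 := hhalf m
      calc c (m+1) ≤ (c m)^2 := h1
        _ ≤ (1/2) * c m := by nlinarith
        _ ≤ (1/2) * (1/2:ℝ)^(m+1) := by nlinarith
        _ = (1/2:ℝ)^(m+2) := by ring
  have hlim : Tendsto (fun n : ℕ => (1/2:ℝ)^(n+1)) atTop (nhds 0) := by
    have := tendsto_pow_atTop_nhds_zero_of_lt_one (by norm_num : (0:ℝ) ≤ 1/2) (by norm_num)
    exact this.comp (tendsto_add_atTop_nat 1)
  exact tendsto_of_tendsto_of_tendsto_of_le_of_le tendsto_const_nhds hlim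
    (fun n => (hpos n).le) hbound
end

section
/- The polynomial 256x⁴ - 768x³ + 832x² - 384x + 1 has exactly two real roots, and its smallest real root lies in the open interval (0, 1). -/
theorem stmt_19 :
    ∃ r s : ℝ, r < s ∧
      (256 * r^4 - 768 * r^3 + 832 * r^2 - 384 * r + 1 = 0) ∧
      (256 * s^4 - 768 * s^3 + 832 * s^2 - 384 * s + 1 = 0) ∧
      (∀ t : ℝ, 256 * t^4 - 768 * t^3 + 832 * t^2 - 384 * t + 1 = 0 → t = r ∨ t = s) ∧
      r ∈ Set.Ioo (0:ℝ) 1 := by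
  have h7 : (Real.sqrt 7) ^ 2 = 7 := Real.sq_sqrt (by norm_num)
  have h7nn : (0:ℝ) ≤ Real.sqrt 7 := Real.sqrt_nonneg 7
  have h7lt : Real.sqrt 7 < 8/3 := by
    nlinarith [h7, h7nn]
  have h7gt : (1:ℝ) < 3 * Real.sqrt 7 := by
    nlinarith [h7, h7nn]
  set c : ℝ := Real.sqrt (1 + 3 * Real.sqrt 7) with hc
  have hcnn : 0 ≤ c := Real.sqrt_nonneg _
  have hc2 : c ^ 2 = 1 + 3 * Real.sqrt 7 := Real.sq_sqrt (by linarith)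
  have hcpos : 0 < c := by
    rcases hcnn.lt_or_eq with h | h
    · exact h
    · exfalso; nlinarith [hc2, h7gt]
  have hclt3 : c < 3 := by nlinarith [hc2, hcnn, h7lt, h7nn]
  refine ⟨(3 - c)/4, (3 + c)/4, by linarith, ?_, ?_, ?_, ?_⟩
  · nlinarith [hc2, h7]
  · nlinarith [hc2, h7]
  · intro t ht
    have key : (16 * t^2 - 24*t + 8 - 3 * Real.sqrt 7) *
        (16 * t^2 - 24*t + 8 + 3 * Real.sqrt 7) = 0 := by
      nlinarith [ht, h7]
    have hpos : 0 < 16 * t^2 - 24*t + 8 + 3 * Real.sqrt 7 := by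
      nlinarith [sq_nonneg (4*t - 3), h7gt]
    have h1 : 16 * t^2 - 24*t + 8 - 3 * Real.sqrt 7 = 0 := by
      rcases mul_eq_zero.mp key with h | h
      · exact h
      · linarith
    have h2 : (4*t - 3 - c) * (4*t - 3 + c) = 0 := by
      nlinarith [hc2, h1]
    rcases mul_eq_zero.mp h2 with h | h
    · right; linarith
    · left; linarith
  · constructor <;> [linarith; linarith]
end
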